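/- Let M be a module over a ring R with only finitely many small submodules. Then Rad(M) is a small submodule of M; in particular Rad(M) ≠ M (provided M ≠ 0). -/

import Mathlib

/-- A submodule `N` of `M` is small (superfluous): `N + A = M` implies `A = M`. -/
def IsSmallSubmodule {R M : Type*} [Ring R] [AddCommGroup M] [Module R M]
    (N : Submodule R M) : Prop :=
  ∀ A : Submodule R M, N ⊔ A = ⊤ → A = ⊤

/-- `M` is an fs-module: it has only finitely many small submodules. -/
def IsFsModule (R M : Type*) [Ring R] [AddCommGroup M] [Module R M] : Prop :=
  {N : Submodule R M | IsSmallSubmodule N}.Finite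

/-- The radical of `M`, as the sum of all small submodules of `M`. -/
def modRad (R M : Type*) [Ring R] [AddCommGroup M] [Module R M] : Submodule R M :=
  sSup {N : Submodule R M | IsSmallSubmodule N}

/-- The radical of `M`, as the intersection of all maximal submodules of `M`. -/
def modRad' (R M : Type*) [Ring R] [AddCommGroup M] [Module R M] : Submodule R M :=
  sInf {N : Submodule R M | IsCoatom N}

/-- The socle of `M`: the sum of all minimal (simple) submodules of `M`. -/
def modSoc (R M : Type*) [Ring R] [AddCommGroup M] [Module R M] : Submodule R M :=
  sSup {N : Submodule R M | IsAtom N}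

/-- `M` has finite hollow dimension: for every descending chain `N₁ ⊇ N₂ ⊇ ⋯`
there is `n` such that `Nₙ / N_k` is small in `M / N_k` for all `k ≥ n`. -/
def HasFiniteHollowDim (R M : Type*) [Ring R] [AddCommGroup M] [Module R M] : Prop :=
  ∀ N : ℕ → Submodule R M, (∀ i j, i ≤ j → N j ≤ N i) →
    ∃ n, ∀ k, n ≤ k → IsSmallSubmodule (Submodule.map (N k).mkQ (N n))

/-- `M` has finite Goldie dimension: it contains no infinite direct sum of
nonzero submodules. -/
def HasFiniteGoldieDim (R M : Type*) [Ring R] [AddCommGroup M] [Module R M] : Prop :=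
  ¬ ∃ f : ℕ → Submodule R M, (∀ i, f i ≠ ⊥) ∧ iSupIndep f

theorem rad_small_of_fs (R M : Type*) [Ring R] [AddCommGroup M] [Module R M]
    (hfs : IsFsModule R M) :
    IsSmallSubmodule (modRad R M) ∧ (Nontrivial M → modRad R M ≠ ⊤) := by
  have key : ∀ s : Set (Submodule R M), s.Finite →
      s ⊆ {N : Submodule R M | IsSmallSubmodule N} → IsSmallSubmodule (sSup s) := by
    intro s hs
    refine Set.Finite.induction_on (motive := fun s _ => s ⊆ {N : Submodule R M | IsSmallSubmodule N} → IsSmallSubmodule (sSup s)) s hs ?_ ?_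
    · intro _
      rw [sSup_empty]; exact fun A h => by simpa using h
    · intro a t _ _ ih hsub A hA
      rw [sSup_insert, sup_assoc] at hA
      have h1 := hsub (Set.mem_insert a t) _ hA
      exact ih (fun x hx => hsub (Set.mem_insert_of_mem a hx)) A h1
  have hsmall : IsSmallSubmodule (modRad R M) := key _ hfs le_rfl
  refine ⟨hsmall, fun hnt hrad => ?_⟩
  have := hsmall ⊥ (by rw [hrad.symm] at *; simp [hrad])
  have : (⊥ : Submodule R M) = ⊤ := this
  exact (bot_ne_top (α := Submodule R M)) this
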